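/- Let G be a finite connected simple graph, let μ be a pmf on the spanning trees of G, and let H be a vertex-induced subgraph of G with nonempty vertex set. Then ∑_{e ∈ E(H)} η_μ(e) ≤ |V(H)| − 1. Moreover, if H is connected, then equality holds if and only if every spanning tree γ with μ(γ) > 0 satisfies that γ ∩ E(H) is a spanning tree of H. -/

import Mathlib

open scoped Classical

noncomputable section

variable {V : Type*} [Fintype V] [DecidableEq V]

/-- `T` is (the edge set of) a spanning tree of the vertex-induced subgraph of `G`
on the vertex set `S`: its edges are edges of `G` with both endpoints in `S`,
it is acyclic, and every two vertices of `S` are joined by a path using edges of `T`. -/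
def IsSpanningTreeOn (G : SimpleGraph V) (S : Finset V) (T : Finset (Sym2 V)) : Prop :=
  (↑T : Set (Sym2 V)) ⊆ G.edgeSet ∧ (∀ e ∈ T, ∀ v ∈ e, v ∈ S) ∧
    (SimpleGraph.fromEdgeSet (↑T : Set (Sym2 V))).IsAcyclic ∧
    ∀ u ∈ S, ∀ w ∈ S, (SimpleGraph.fromEdgeSet (↑T : Set (Sym2 V))).Reachable u w

/-- A probability mass function on the spanning trees of the induced subgraph of `G` on `S`. -/
structure TreePMFOn (G : SimpleGraph V) (S : Finset V) where
  toFun : Finset (Sym2 V) → ℝ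
  nonneg : ∀ T, 0 ≤ toFun T
  supp : ∀ T, toFun T ≠ 0 → IsSpanningTreeOn G S T
  sum_one : ∑ T : Finset (Sym2 V), toFun T = 1

/-- Edge probability `η_μ(e)`. -/
def edgeProbOn {G : SimpleGraph V} {S : Finset V} (μ : TreePMFOn G S) (e : Sym2 V) : ℝ :=
  ∑ T : Finset (Sym2 V), if e ∈ T then μ.toFun T else 0

/-- Edges of `G` with both endpoints in `S`. -/
def inducedEdges (G : SimpleGraph V) (S : Finset V) : Finset (Sym2 V) :=
  G.edgeFinset.filter fun e => ∀ v ∈ e, v ∈ S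

/-- Variance of the edge probabilities of `μ` over the edges within `S`. -/
def edgeVarOn {G : SimpleGraph V} {S : Finset V} (μ : TreePMFOn G S) : ℝ :=
  (∑ e ∈ inducedEdges G S, (edgeProbOn μ e) ^ 2) / ((inducedEdges G S).card : ℝ) -
    ((∑ e ∈ inducedEdges G S, edgeProbOn μ e) / ((inducedEdges G S).card : ℝ)) ^ 2

/-- A pmf is fair if it minimizes the variance of the edge probabilities. -/
def IsFairOn {G : SimpleGraph V} {S : Finset V} (μ : TreePMFOn G S) : Prop :=
  ∀ ν : TreePMFOn G S, edgeVarOn μ ≤ edgeVarOn ν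

/-- A fair tree: a spanning tree in the support of some fair pmf. -/
def IsFairTreeOn (G : SimpleGraph V) (S : Finset V) (T : Finset (Sym2 V)) : Prop :=
  ∃ μ : TreePMFOn G S, IsFairOn μ ∧ μ.toFun T ≠ 0

/-- The 1-density `θ(H) = |E(H)|/(|V(H)|-1)` of the induced subgraph on `S`. -/
def density (G : SimpleGraph V) (S : Finset V) : ℝ :=
  ((inducedEdges G S).card : ℝ) / ((S.card : ℝ) - 1)

/-- `S` induces a member of `H(G)`: connected, vertex-induced, with at least one edge. -/
def InH (G : SimpleGraph V) (S : Finset V) : Prop :=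
  (inducedEdges G S).Nonempty ∧ (G.induce (↑S : Set V)).Connected

/-- `S` induces a 1-densest subgraph of `G`. -/
def IsDensest (G : SimpleGraph V) (S : Finset V) : Prop :=
  InH G S ∧ ∀ S' : Finset V, InH G S' → density G S' ≤ density G S

/-- `S` induces a minimal 1-densest subgraph of `G`. -/
def IsMinimalDensest (G : SimpleGraph V) (S : Finset V) : Prop :=
  IsDensest G S ∧ ∀ S' : Finset V, S' ⊆ S → S' ≠ S → ¬ IsDensest G S'

/-- The induced subgraph on `S` is homogeneous: some pmf on its spanning trees
has constant edge probabilities. -/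
def IsHomogeneousOn (G : SimpleGraph V) (S : Finset V) : Prop :=
  ∃ μ : TreePMFOn G S, ∃ c : ℝ, ∀ e ∈ inducedEdges G S, edgeProbOn μ e = c

/-- The induced subgraph on `S` has the strict 1-density property. -/
def StrictDensityOn (G : SimpleGraph V) (S : Finset V) : Prop :=
  ∀ S' : Finset V, S' ⊆ S → InH G S' → S' ≠ S → density G S' < density G S

section AuxLemmas

open SimpleGraph Finset

variable {V' : Type*} [Fintype V'] [DecidableEq V']

lemma isAcyclic_mono' {G H : SimpleGraph V'} (h : G ≤ H) (hH : H.IsAcyclic) : G.IsAcyclic := by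
  intro v c hc
  exact hH (c.mapLe h) (hc.mapLe h)

/-- A forest whose edges lie within `S` has at most `|S| - 1` edges. -/
lemma forest_card (T : Finset (Sym2 V')) :
    ∀ S : Finset V', S.Nonempty → (∀ e ∈ T, ¬ e.IsDiag) → (∀ e ∈ T, ∀ v ∈ e, v ∈ S) →
      (SimpleGraph.fromEdgeSet (↑T : Set (Sym2 V'))).IsAcyclic → T.card + 1 ≤ S.card := by
  induction T using Finset.strongInduction with
  | _ T ih =>
    intro S hS hdiag hsub hac
    rcases T.eq_empty_or_nonempty with rfl | ⟨e, he⟩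
    · simpa using hS.card_pos
    · revert he
      induction e using Sym2.ind with
      | _ u v =>
        intro he
        have huv : u ≠ v := fun h => hdiag _ he (by rw [h]; exact Sym2.mk_isDiag_iff.mpr rfl)
        have huS : u ∈ S := hsub _ he u (Sym2.mem_mk_left u v)
        have hvS : v ∈ S := hsub _ he v (Sym2.mem_mk_right u v)
        have hadj : (SimpleGraph.fromEdgeSet (↑T : Set (Sym2 V'))).Adj u v :=
          (SimpleGraph.fromEdgeSet_adj _).mpr ⟨Finset.mem_coe.mpr he, huv⟩
        have hb := (SimpleGraph.isAcyclic_iff_forall_adj_isBridge.mp hac) hadj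
        set F := SimpleGraph.fromEdgeSet (↑(T.erase s(u, v)) : Set (Sym2 V')) with hF
        have hle : F ≤ SimpleGraph.fromEdgeSet (↑T : Set (Sym2 V')) \
            SimpleGraph.fromEdgeSet {s(u, v)} := by
          intro x y hxy
          rw [hF, SimpleGraph.fromEdgeSet_adj] at hxy
          obtain ⟨hmem, hne⟩ := hxy
          rw [Finset.mem_coe, Finset.mem_erase] at hmem
          refine ⟨(SimpleGraph.fromEdgeSet_adj _).mpr ⟨hmem.2, hne⟩, ?_⟩
          rw [SimpleGraph.fromEdgeSet_adj]
          rintro ⟨h1, -⟩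
          exact hmem.1 (Set.mem_singleton_iff.mp h1)
        have hnr : ¬ F.Reachable u v := fun hr =>
          (SimpleGraph.isBridge_iff.mp hb) (hr.mono hle)
        set C := S.filter (fun x => F.Reachable u x) with hC
        have hCsub : C ⊆ S := Finset.filter_subset _ _
        have huC : u ∈ C := Finset.mem_filter.mpr ⟨huS, SimpleGraph.Reachable.refl u⟩
        have hvC : v ∈ S \ C := Finset.mem_sdiff.mpr
          ⟨hvS, fun h => hnr (Finset.mem_filter.mp h).2⟩
        -- every edge of `T.erase s(u,v)` lies within `C` or within `S \ C`
        set T1 := (T.erase s(u, v)).filter (fun f => ∀ x ∈ f, x ∈ C) with hT1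
        set T2 := (T.erase s(u, v)).filter (fun f => ∀ x ∈ f, x ∈ S \ C) with hT2
        have hcover : T.erase s(u, v) ⊆ T1 ∪ T2 := by
          intro f hf
          revert hf
          induction f using Sym2.ind with
          | _ x y =>
            intro hf
            have hfT : s(x, y) ∈ T := Finset.mem_of_mem_erase hf
            have hxS : x ∈ S := hsub _ hfT x (Sym2.mem_mk_left x y)
            have hyS : y ∈ S := hsub _ hfT y (Sym2.mem_mk_right x y)
            have hxy : x ≠ y := fun h => hdiag _ hfT (by rw [h]; exact Sym2.mk_isDiag_iff.mpr rfl)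
            have hadjf : F.Adj x y := (SimpleGraph.fromEdgeSet_adj _).mpr ⟨Finset.mem_coe.mpr hf, hxy⟩
            have hiff : F.Reachable u x ↔ F.Reachable u y :=
              ⟨fun h => h.trans hadjf.reachable, fun h => h.trans hadjf.symm.reachable⟩
            by_cases hx : F.Reachable u x
            · refine Finset.mem_union_left _ (Finset.mem_filter.mpr ⟨hf, ?_⟩)
              intro z hz
              rcases Sym2.mem_iff.mp hz with rfl | rfl
              · exact Finset.mem_filter.mpr ⟨hxS, hx⟩
              · exact Finset.mem_filter.mpr ⟨hyS, hiff.mp hx⟩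
            · refine Finset.mem_union_right _ (Finset.mem_filter.mpr ⟨hf, ?_⟩)
              intro z hz
              rcases Sym2.mem_iff.mp hz with rfl | rfl
              · exact Finset.mem_sdiff.mpr ⟨hxS, fun h => hx (Finset.mem_filter.mp h).2⟩
              · exact Finset.mem_sdiff.mpr ⟨hyS, fun h => hx (hiff.mpr (Finset.mem_filter.mp h).2)⟩
        have hdisj : Disjoint T1 T2 := by
          rw [Finset.disjoint_left]
          intro f hf1 hf2
          revert hf1 hf2
          induction f using Sym2.ind with
          | _ x y =>
            intro hf1 hf2
            have h1 := (Finset.mem_filter.mp hf1).2 x (Sym2.mem_mk_left x y)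
            have h2 := (Finset.mem_filter.mp hf2).2 x (Sym2.mem_mk_left x y)
            exact (Finset.mem_sdiff.mp h2).2 h1
        have hcard12 : (T.erase s(u, v)).card ≤ T1.card + T2.card := by
          calc (T.erase s(u, v)).card ≤ (T1 ∪ T2).card := Finset.card_le_card hcover
            _ ≤ T1.card + T2.card := Finset.card_union_le _ _
        -- apply the induction hypothesis to `T1, C` and `T2, S \ C`
        have hss1 : T1 ⊂ T :=
          Finset.ssubset_of_subset_of_ssubset (Finset.filter_subset _ _)
            (Finset.erase_ssubset he)
        have hss2 : T2 ⊂ T :=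
          Finset.ssubset_of_subset_of_ssubset (Finset.filter_subset _ _)
            (Finset.erase_ssubset he)
        have hmono1 : SimpleGraph.fromEdgeSet (↑T1 : Set (Sym2 V')) ≤
            SimpleGraph.fromEdgeSet (↑T : Set (Sym2 V')) :=
          SimpleGraph.fromEdgeSet_mono (by exact_mod_cast hss1.subset)
        have hmono2 : SimpleGraph.fromEdgeSet (↑T2 : Set (Sym2 V')) ≤
            SimpleGraph.fromEdgeSet (↑T : Set (Sym2 V')) :=
          SimpleGraph.fromEdgeSet_mono (by exact_mod_cast hss2.subset)
        have hdisj1 : T1 ⊂ T := hss1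
        have ih1 : T1.card + 1 ≤ C.card :=
          ih T1 hss1 C ⟨u, huC⟩ (fun f hf => hdiag f (hss1.subset hf))
            (fun f hf => (Finset.mem_filter.mp hf).2) (isAcyclic_mono' hmono1 hac)
        have ih2 : T2.card + 1 ≤ (S \ C).card :=
          ih T2 hss2 (S \ C) ⟨v, hvC⟩ (fun f hf => hdiag f (hss2.subset hf))
            (fun f hf => (Finset.mem_filter.mp hf).2) (isAcyclic_mono' hmono2 hac)
        have hCS : (S \ C).card + C.card = S.card := Finset.card_sdiff_add_card_eq_card hCsub
        have herase : (T.erase s(u, v)).card = T.card - 1 := Finset.card_erase_of_mem he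
        have hTpos : 1 ≤ T.card := Finset.card_pos.mpr ⟨_, he⟩
        omega

/-- A forest within `S` with `|S| - 1` edges connects all of `S`. -/
lemma forest_connected {T : Finset (Sym2 V')} {S : Finset V'}
    (hdiag : ∀ e ∈ T, ¬ e.IsDiag) (hsub : ∀ e ∈ T, ∀ v ∈ e, v ∈ S)
    (hac : (SimpleGraph.fromEdgeSet (↑T : Set (Sym2 V'))).IsAcyclic)
    (hcard : T.card + 1 = S.card) :
    ∀ u ∈ S, ∀ w ∈ S, (SimpleGraph.fromEdgeSet (↑T : Set (Sym2 V'))).Reachable u w := by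
  intro u hu w hw
  by_contra hnr
  set F := SimpleGraph.fromEdgeSet (↑T : Set (Sym2 V')) with hF
  set C := S.filter (fun x => F.Reachable u x) with hC
  have hCsub : C ⊆ S := Finset.filter_subset _ _
  have huC : u ∈ C := Finset.mem_filter.mpr ⟨hu, SimpleGraph.Reachable.refl u⟩
  have hwC : w ∈ S \ C := Finset.mem_sdiff.mpr ⟨hw, fun h => hnr (Finset.mem_filter.mp h).2⟩
  set T1 := T.filter (fun f => ∀ x ∈ f, x ∈ C) with hT1
  set T2 := T.filter (fun f => ∀ x ∈ f, x ∈ S \ C) with hT2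
  have hcover : T ⊆ T1 ∪ T2 := by
    intro f hf
    revert hf
    induction f using Sym2.ind with
    | _ x y =>
      intro hf
      have hxS : x ∈ S := hsub _ hf x (Sym2.mem_mk_left x y)
      have hyS : y ∈ S := hsub _ hf y (Sym2.mem_mk_right x y)
      have hxy : x ≠ y := fun h => hdiag _ hf (by rw [h]; exact Sym2.mk_isDiag_iff.mpr rfl)
      have hadjf : F.Adj x y := (SimpleGraph.fromEdgeSet_adj _).mpr ⟨Finset.mem_coe.mpr hf, hxy⟩
      have hiff : F.Reachable u x ↔ F.Reachable u y :=
        ⟨fun h => h.trans hadjf.reachable, fun h => h.trans hadjf.symm.reachable⟩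
      by_cases hx : F.Reachable u x
      · refine Finset.mem_union_left _ (Finset.mem_filter.mpr ⟨hf, ?_⟩)
        intro z hz
        rcases Sym2.mem_iff.mp hz with rfl | rfl
        · exact Finset.mem_filter.mpr ⟨hxS, hx⟩
        · exact Finset.mem_filter.mpr ⟨hyS, hiff.mp hx⟩
      · refine Finset.mem_union_right _ (Finset.mem_filter.mpr ⟨hf, ?_⟩)
        intro z hz
        rcases Sym2.mem_iff.mp hz with rfl | rfl
        · exact Finset.mem_sdiff.mpr ⟨hxS, fun h => hx (Finset.mem_filter.mp h).2⟩
        · exact Finset.mem_sdiff.mpr ⟨hyS, fun h => hx (hiff.mpr (Finset.mem_filter.mp h).2)⟩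
  have hcard12 : T.card ≤ T1.card + T2.card := by
    calc T.card ≤ (T1 ∪ T2).card := Finset.card_le_card hcover
      _ ≤ T1.card + T2.card := Finset.card_union_le _ _
  have hmono1 : SimpleGraph.fromEdgeSet (↑T1 : Set (Sym2 V')) ≤ F :=
    SimpleGraph.fromEdgeSet_mono (by exact_mod_cast Finset.filter_subset _ _)
  have hmono2 : SimpleGraph.fromEdgeSet (↑T2 : Set (Sym2 V')) ≤ F :=
    SimpleGraph.fromEdgeSet_mono (by exact_mod_cast Finset.filter_subset _ _)
  have ih1 : T1.card + 1 ≤ C.card :=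
    forest_card T1 C ⟨u, huC⟩ (fun f hf => hdiag f (Finset.filter_subset _ _ hf))
      (fun f hf => (Finset.mem_filter.mp hf).2) (isAcyclic_mono' hmono1 hac)
  have ih2 : T2.card + 1 ≤ (S \ C).card :=
    forest_card T2 (S \ C) ⟨w, hwC⟩ (fun f hf => hdiag f (Finset.filter_subset _ _ hf))
      (fun f hf => (Finset.mem_filter.mp hf).2) (isAcyclic_mono' hmono2 hac)
  have hCS : (S \ C).card + C.card = S.card := Finset.card_sdiff_add_card_eq_card hCsub
  omega

/-- A spanning tree of the induced subgraph on `S` has exactly `|S| - 1` edges. -/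
lemma spanningTree_card {G : SimpleGraph V'} {S : Finset V'} {T : Finset (Sym2 V')}
    (hS : S.Nonempty) (h : IsSpanningTreeOn G S T) : T.card + 1 = S.card := by
  obtain ⟨hedge, hsub, hac, hconn⟩ := h
  set F := SimpleGraph.fromEdgeSet (↑T : Set (Sym2 V')) with hF
  have hdiag : ∀ e ∈ T, ¬ e.IsDiag := fun e he =>
    G.not_isDiag_of_mem_edgeSet (hedge (Finset.mem_coe.mpr he))
  set St : Set V' := (↑S : Set V') with hSt
  set G₂ : SimpleGraph St := F.induce St with hG₂
  have hadjS : ∀ {x y : V'}, F.Adj x y → x ∈ S ∧ y ∈ S := by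
    intro x y hxy
    have hm : s(x, y) ∈ T := by
      have := hxy
      rw [hF, SimpleGraph.fromEdgeSet_adj] at this
      exact Finset.mem_coe.mp this.1
    exact ⟨hsub _ hm x (Sym2.mem_mk_left x y), hsub _ hm y (Sym2.mem_mk_right x y)⟩
  -- transfer walks into the induced graph
  have key : ∀ {x y : V'} (_ : F.Walk x y) (hx : x ∈ S) (hy : y ∈ S),
      G₂.Reachable ⟨x, hx⟩ ⟨y, hy⟩ := by
    intro x y p
    induction p with
    | nil =>
      intro hx hy
      exact SimpleGraph.Reachable.refl _
    | @cons a b c hab p ihp =>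
      intro hx hy
      have hb : b ∈ S := (hadjS hab).2
      have hstep : G₂.Adj ⟨a, hx⟩ ⟨b, hb⟩ := hab
      exact hstep.reachable.trans (ihp hb hy)
  have htree : G₂.IsTree := by
    constructor
    · haveI : Nonempty St := ⟨⟨hS.choose, hS.choose_spec⟩⟩
      constructor
      rintro ⟨x, hx⟩ ⟨y, hy⟩
      exact (hconn x hx y hy).elim fun p => key p hx hy
    · intro a c hc
      have hfinj : Function.Injective (Subtype.val : St → V') := Subtype.val_injective
      let f : G₂ →g F := ⟨Subtype.val, fun hadj => hadj⟩
      exact hac (c.map f) ((SimpleGraph.Walk.map_isCycle_iff_of_injective hfinj).mpr hc)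
  have hcount := htree.card_edgeFinset
  have hcardV : Fintype.card St = S.card :=
    (Fintype.card_congr (Equiv.subtypeEquivRight fun x => Finset.mem_coe)).trans
      (Fintype.card_coe S)
  have hedgecard : G₂.edgeFinset.card = T.card := by
    refine Finset.card_bij (fun e _ => Sym2.map Subtype.val e) ?_ ?_ ?_
    · intro e he
      rw [SimpleGraph.mem_edgeFinset] at he
      revert he
      induction e using Sym2.ind with
      | _ a b =>
        intro he
        have hadj : F.Adj ↑a ↑b := he
        show Sym2.map Subtype.val s(a, b) ∈ T
        rw [Sym2.map_pair_eq]
        have := hadj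
        rw [hF, SimpleGraph.fromEdgeSet_adj] at this
        exact Finset.mem_coe.mp this.1
    · intro e1 h1 e2 h2 heq
      exact Sym2.map.injective Subtype.val_injective heq
    · intro f hf
      revert hf
      induction f using Sym2.ind with
      | _ x y =>
        intro hf
        have hxS : x ∈ S := hsub _ hf x (Sym2.mem_mk_left x y)
        have hyS : y ∈ S := hsub _ hf y (Sym2.mem_mk_right x y)
        have hxy : x ≠ y := fun h => hdiag _ hf (by rw [h]; exact Sym2.mk_isDiag_iff.mpr rfl)
        have hadj : F.Adj x y := (SimpleGraph.fromEdgeSet_adj _).mpr ⟨Finset.mem_coe.mpr hf, hxy⟩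
        refine ⟨s((⟨x, hxS⟩ : St), (⟨y, hyS⟩ : St)), ?_, ?_⟩
        · rw [SimpleGraph.mem_edgeFinset]
          exact hadj
        · show Sym2.map Subtype.val s((⟨x, hxS⟩ : St), (⟨y, hyS⟩ : St)) = s(x, y)
          rw [Sym2.map_pair_eq]
  omega

end AuxLemmas

/-- For a pmf `μ` on the spanning trees of a finite connected simple graph
`G` and a nonempty vertex set `S`, the sum of the edge probabilities over the edges within
`S` is at most `|S| - 1`; and if the induced subgraph on `S` is connected, equality holds
iff every tree in the support of `μ` restricts to a spanning tree of the induced subgraph. -/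
theorem sum_edgeProb_le_card_sub_one
    {V : Type*} [Fintype V] [DecidableEq V] (G : SimpleGraph V) (hG : G.Connected)
    (μ : TreePMFOn G Finset.univ) (S : Finset V) (hS : S.Nonempty) :
    (∑ e ∈ inducedEdges G S, edgeProbOn μ e) ≤ (S.card : ℝ) - 1 ∧
    ((G.induce (↑S : Set V)).Connected →
      ((∑ e ∈ inducedEdges G S, edgeProbOn μ e) = (S.card : ℝ) - 1 ↔
        ∀ T : Finset (Sym2 V), μ.toFun T ≠ 0 →
          IsSpanningTreeOn G S (T.filter fun e => ∀ v ∈ e, v ∈ S))) := by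
  classical
  have hswap : (∑ e ∈ inducedEdges G S, edgeProbOn μ e)
      = ∑ T : Finset (Sym2 V), ((inducedEdges G S ∩ T).card : ℝ) * μ.toFun T := by
    unfold edgeProbOn
    rw [Finset.sum_comm]
    refine Finset.sum_congr rfl fun T _ => ?_
    rw [← Finset.sum_filter, Finset.sum_const, nsmul_eq_mul, Finset.filter_mem_eq_inter]
  have hinter : ∀ T : Finset (Sym2 V), μ.toFun T ≠ 0 →
      inducedEdges G S ∩ T = T.filter (fun e => ∀ v ∈ e, v ∈ S) := by
    intro T hT
    have hst := μ.supp T hT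
    ext e
    simp only [Finset.mem_inter, Finset.mem_filter, inducedEdges, SimpleGraph.mem_edgeFinset]
    constructor
    · rintro ⟨⟨h1, h2⟩, h3⟩
      exact ⟨h3, h2⟩
    · rintro ⟨h1, h2⟩
      exact ⟨⟨hst.1 (Finset.mem_coe.mpr h1), h2⟩, h1⟩
  have hfacts : ∀ T : Finset (Sym2 V), μ.toFun T ≠ 0 →
      (∀ e ∈ T.filter (fun e => ∀ v ∈ e, v ∈ S), ¬ e.IsDiag) ∧
      (SimpleGraph.fromEdgeSet
        (↑(T.filter (fun e => ∀ v ∈ e, v ∈ S)) : Set (Sym2 V))).IsAcyclic := by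
    intro T hT
    have hst := μ.supp T hT
    constructor
    · intro e he
      exact G.not_isDiag_of_mem_edgeSet
        (hst.1 (Finset.mem_coe.mpr (Finset.mem_filter.mp he).1))
    · exact isAcyclic_mono'
        (SimpleGraph.fromEdgeSet_mono (by exact_mod_cast Finset.filter_subset _ _)) hst.2.2.1
  have hforest : ∀ T : Finset (Sym2 V), μ.toFun T ≠ 0 →
      (T.filter (fun e => ∀ v ∈ e, v ∈ S)).card + 1 ≤ S.card := by
    intro T hT
    exact forest_card _ S hS (hfacts T hT).1 (fun e he => (Finset.mem_filter.mp he).2)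
      (hfacts T hT).2
  have hbound : ∀ T : Finset (Sym2 V),
      ((inducedEdges G S ∩ T).card : ℝ) * μ.toFun T ≤ ((S.card : ℝ) - 1) * μ.toFun T := by
    intro T
    by_cases hT : μ.toFun T = 0
    · rw [hT]; simp
    · have h1 := hforest T hT
      rw [hinter T hT]
      have h2 : (((T.filter (fun e => ∀ v ∈ e, v ∈ S)).card : ℝ)) ≤ (S.card : ℝ) - 1 := by
        have h3 := (Nat.cast_le (α := ℝ)).mpr h1
        push_cast at h3
        linarith
      exact mul_le_mul_of_nonneg_right h2 (μ.nonneg T)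
  have hsum_one : ∑ T : Finset (Sym2 V), ((S.card : ℝ) - 1) * μ.toFun T
      = (S.card : ℝ) - 1 := by
    rw [← Finset.mul_sum, μ.sum_one, mul_one]
  have hle : (∑ e ∈ inducedEdges G S, edgeProbOn μ e) ≤ (S.card : ℝ) - 1 := by
    rw [hswap, ← hsum_one]
    exact Finset.sum_le_sum fun T _ => hbound T
  refine ⟨hle, fun _hconn => ⟨?_, ?_⟩⟩
  · intro heq T hT
    have heq' : ∑ T : Finset (Sym2 V), ((inducedEdges G S ∩ T).card : ℝ) * μ.toFun T
        = ∑ T : Finset (Sym2 V), ((S.card : ℝ) - 1) * μ.toFun T := by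
      rw [← hswap, heq]
      exact hsum_one.symm
    have hall := (Finset.sum_eq_sum_iff_of_le (fun i _ => hbound i)).mp heq'
    have hTerm := hall T (Finset.mem_univ T)
    rw [hinter T hT] at hTerm
    have hreal : (((T.filter (fun e => ∀ v ∈ e, v ∈ S)).card : ℝ)) = (S.card : ℝ) - 1 :=
      mul_right_cancel₀ hT hTerm
    have hnat : (T.filter (fun e => ∀ v ∈ e, v ∈ S)).card + 1 = S.card := by
      have : (((T.filter (fun e => ∀ v ∈ e, v ∈ S)).card : ℝ)) + 1 = (S.card : ℝ) := by
        linarith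
      exact_mod_cast this
    have hst := μ.supp T hT
    refine ⟨?_, ?_, (hfacts T hT).2, ?_⟩
    · intro e he
      exact hst.1 (Finset.mem_coe.mpr (Finset.mem_filter.mp (Finset.mem_coe.mp he)).1)
    · intro e he
      exact (Finset.mem_filter.mp he).2
    · exact forest_connected (hfacts T hT).1 (fun e he => (Finset.mem_filter.mp he).2)
        (hfacts T hT).2 hnat
  · intro hall
    rw [hswap, ← hsum_one]
    refine Finset.sum_congr rfl fun T _ => ?_
    by_cases hT : μ.toFun T = 0
    · rw [hT]; ring
    · have hcard := spanningTree_card hS (hall T hT)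
      rw [hinter T hT]
      have hreal : (((T.filter (fun e => ∀ v ∈ e, v ∈ S)).card : ℝ)) = (S.card : ℝ) - 1 := by
        have : (((T.filter (fun e => ∀ v ∈ e, v ∈ S)).card : ℝ)) + 1 = (S.card : ℝ) := by
          exact_mod_cast hcard
        linarith
      rw [hreal]
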